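/- Let (G,M,I) be a finite context with ∅'' = ∅, let z ∈ G and H = G ∖ {z}, let π□ be the finest extent partition of (G,M,I), let z^□□ be the class of π□ containing z, and assume z^□□ ≠ {z}. Let T be a classification tree in the box extent lattice B(H, M, I ∩ (H×M)) of the subcontext that contains every minimal nonempty box extent of the subcontext (every atom of B(H, M, I ∩ (H×M))), and set T* = {E ∈ T : E is a box extent of (G,M,I)} ∪ {E ∪ {z} : E ∈ T, E ∪ {z} is a box extent of (G,M,I)}. Then T* ∪ {z^□□} is a classification tree in the box extent lattice B(G,M,I) that contains every minimal nonempty box extent of (G,M,I). -/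

import Mathlib

open Set

variable {G M : Type*}

/-- The attribute-derivation `A'` of a set of objects (the restricted relation of a
subcontext agrees with `I` on its object set, so no restriction is needed here). -/
def polarUp (I : G → M → Prop) (A : Set G) : Set M := {m | ∀ g ∈ A, I g m}

/-- The object-derivation `B'` of a set of attributes, computed in the subcontext whose
object set is `H` (relation `I ∩ H×M`). -/
def polarDown (I : G → M → Prop) (H : Set G) (B : Set M) : Set G :=
  {g | g ∈ H ∧ ∀ m ∈ B, I g m}

/-- The closure `A''` computed in the subcontext with object set `H`.
Taking `H = Set.univ` gives the closure in the full context `(G,M,I)`. -/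
def cl2 (I : G → M → Prop) (H A : Set G) : Set G := polarDown I H (polarUp I A)

/-- `A` is an extent of the subcontext with object set `H`. -/
def IsExtent (I : G → M → Prop) (H A : Set G) : Prop := A ⊆ H ∧ cl2 I H A = A

/-- An extent partition of the subcontext with object set `H`: a partition of `H`
all of whose classes are extents. -/
def IsExtentPartition (I : G → M → Prop) (H : Set G) (π : Set (Set G)) : Prop :=
  (∀ A ∈ π, A.Nonempty) ∧ π.Pairwise Disjoint ∧ ⋃₀ π = H ∧ ∀ A ∈ π, IsExtent I H A

/-- `E` is a box extent of the subcontext with object set `H`: a class of some extent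
partition, or `∅''`. -/
def IsBoxExtent (I : G → M → Prop) (H E : Set G) : Prop :=
  (∃ π : Set (Set G), IsExtentPartition I H π ∧ E ∈ π) ∨ E = cl2 I H ∅

/-- The finest extent partition: every class of every extent partition is a union of
its classes. -/
def IsFinestExtentPartition (I : G → M → Prop) (H : Set G) (π : Set (Set G)) : Prop :=
  IsExtentPartition I H π ∧
    ∀ σ : Set (Set G), IsExtentPartition I H σ → ∀ A ∈ σ, ∃ S ⊆ π, A = ⋃₀ S

/-- A classification tree in the box extent lattice of the subcontext with object set
`H`: a set of nonempty box extents such that for every nonempty box extent `X`,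
`{E ∈ T | X ⊆ E}` is a nonempty chain under inclusion. -/
def IsBoxClassTree (I : G → M → Prop) (H : Set G) (T : Set (Set G)) : Prop :=
  (∀ E ∈ T, E.Nonempty ∧ IsBoxExtent I H E) ∧
  ∀ X : Set G, X.Nonempty → IsBoxExtent I H X →
    ({E ∈ T | X ⊆ E}.Nonempty ∧ IsChain (· ⊆ ·) {E ∈ T | X ⊆ E})

/-- A maximal classification tree in the box extent lattice. -/
def IsMaxBoxClassTree (I : G → M → Prop) (H : Set G) (T : Set (Set G)) : Prop :=
  IsBoxClassTree I H T ∧ ∀ T' : Set (Set G), IsBoxClassTree I H T' → T ⊆ T' → T' = T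

/-- Given a classification tree `T` of the subcontext `(G ∖ {z}, M, I ∩ (G∖{z})×M)`,
`treeStar I z T = T⁽¹⁾ ∪ {E ∪ {z} | E ∈ T⁽²⁾}`, where `T⁽¹⁾` consists of the members of
`T` that are box extents of `(G,M,I)` and `T⁽²⁾` of those `E ∈ T` with `E ∪ {z}` a box
extent of `(G,M,I)`. -/
def treeStar (I : G → M → Prop) (z : G) (T : Set (Set G)) : Set (Set G) :=
  {E ∈ T | IsBoxExtent I Set.univ E} ∪
    (fun E => E ∪ {z}) '' {E ∈ T | IsBoxExtent I Set.univ (E ∪ {z})}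

section BoxAux

variable {I : G → M → Prop}

lemma polarUp_anti {A B : Set G} (h : A ⊆ B) : polarUp I B ⊆ polarUp I A :=
  fun m hm g hg => hm g (h hg)

lemma cl2_mono (H : Set G) {A B : Set G} (h : A ⊆ B) : cl2 I H A ⊆ cl2 I H B :=
  fun g hg => ⟨hg.1, fun m hm => hg.2 m (polarUp_anti h hm)⟩

lemma subset_cl2 {H A : Set G} (hA : A ⊆ H) : A ⊆ cl2 I H A :=
  fun g hg => ⟨hA hg, fun m hm => hm g hg⟩

lemma cl2_subset (H A : Set G) : cl2 I H A ⊆ H := fun _ hg => hg.1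

lemma cl2_eq_inter (H A : Set G) : cl2 I H A = cl2 I Set.univ A ∩ H := by
  ext g
  simp only [cl2, polarDown, Set.mem_setOf_eq, Set.mem_inter_iff, Set.mem_univ, true_and]
  tauto

lemma extent_inter {H F C : Set G} (hF : IsExtent I H F) (hC : IsExtent I Set.univ C)
    (hCH : C ⊆ H) : IsExtent I Set.univ (F ∩ C) := by
  refine ⟨Set.subset_univ _, Set.Subset.antisymm ?_ (subset_cl2 (Set.subset_univ _))⟩
  have h1 : cl2 I Set.univ (F ∩ C) ⊆ C := by
    conv_rhs => rw [← hC.2]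
    exact cl2_mono _ Set.inter_subset_right
  have h2 : cl2 I Set.univ (F ∩ C) ⊆ F := by
    intro g hg
    have hgH : g ∈ H := hCH (h1 hg)
    have hmem : g ∈ cl2 I H (F ∩ C) := by
      rw [cl2_eq_inter]; exact ⟨hg, hgH⟩
    have := cl2_mono H (Set.inter_subset_left : F ∩ C ⊆ F) hmem
    rw [hF.2] at this
    exact this
  exact Set.subset_inter h2 h1

lemma box_class {H X : Set G} (hH0 : cl2 I H ∅ = ∅) (hX : IsBoxExtent I H X)
    (hne : X.Nonempty) : ∃ σ, IsExtentPartition I H σ ∧ X ∈ σ := by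
  rcases hX with h | h
  · exact h
  · subst h; rw [hH0] at hne; exact absurd hne (by simp)

lemma box_subset {H X : Set G} (hH0 : cl2 I H ∅ = ∅) (hX : IsBoxExtent I H X)
    (hne : X.Nonempty) : X ⊆ H := by
  obtain ⟨σ, hσ, hXσ⟩ := box_class hH0 hX hne
  rw [← hσ.2.2.1]
  exact Set.subset_sUnion_of_mem hXσ

lemma induced_partition (z : G) {σ : Set (Set G)}
    (hσ : IsExtentPartition I Set.univ σ) :
    IsExtentPartition I (Set.univ \ {z})
      {B | B.Nonempty ∧ ∃ C ∈ σ, B = C \ {z}} := by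
  obtain ⟨hne, hdisj, hcov, hext⟩ := hσ
  refine ⟨fun A hA => hA.1, ?_, ?_, ?_⟩
  · rintro A ⟨-, C₁, hC₁, rfl⟩ B ⟨-, C₂, hC₂, rfl⟩ hAB
    have hC : C₁ ≠ C₂ := fun h => hAB (by rw [h])
    exact (hdisj hC₁ hC₂ hC).mono Set.diff_subset Set.diff_subset
  · ext g
    simp only [Set.mem_sUnion, Set.mem_setOf_eq, Set.mem_diff, Set.mem_univ,
      Set.mem_singleton_iff, true_and]
    constructor
    · rintro ⟨B, ⟨-, C, hC, rfl⟩, hg⟩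
      exact hg.2
    · intro hg
      have hg' : g ∈ ⋃₀ σ := by rw [hcov]; trivial
      obtain ⟨C, hC, hgC⟩ := hg'
      exact ⟨C \ {z}, ⟨⟨g, hgC, hg⟩, C, hC, rfl⟩, hgC, hg⟩
  · rintro A ⟨hAne, C, hC, rfl⟩
    refine ⟨fun g hg => ⟨trivial, hg.2⟩, Set.Subset.antisymm ?_ (subset_cl2 (fun g hg => ⟨trivial, hg.2⟩))⟩
    calc cl2 I (Set.univ \ {z}) (C \ {z})
        = cl2 I Set.univ (C \ {z}) ∩ (Set.univ \ {z}) := cl2_eq_inter _ _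
      _ ⊆ cl2 I Set.univ C ∩ (Set.univ \ {z}) :=
          Set.inter_subset_inter_left _ (cl2_mono _ Set.diff_subset)
      _ = C ∩ (Set.univ \ {z}) := by rw [(hext C hC).2]
      _ ⊆ C \ {z} := fun g hg => ⟨hg.1, hg.2.2⟩

lemma box_univ_of_sub_class {z : G} {π : Set (Set G)}
    (hempty : cl2 I Set.univ (∅ : Set G) = ∅)
    (hπ : IsExtentPartition I Set.univ π) {Z : Set G} (hZ : Z ∈ π) (hzZ : z ∈ Z)
    {C : Set G} (hC : C ∈ π) (hCZ : C ≠ Z) {F : Set G} (hFne : F.Nonempty)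
    (hFbox : IsBoxExtent I (Set.univ \ {z}) F) (hFC : F ⊆ C) :
    IsBoxExtent I Set.univ F := by
  have hH0 : cl2 I (Set.univ \ {z}) (∅ : Set G) = ∅ := by
    rw [cl2_eq_inter, hempty, Set.empty_inter]
  obtain ⟨τ, ⟨hτne, hτdisj, hτcov, hτext⟩, hFτ⟩ := box_class hH0 hFbox hFne
  have hCH : ∀ C' ∈ π, C' ≠ Z → C' ⊆ Set.univ \ {z} := by
    intro C' hC' hC'Z g hg
    refine ⟨trivial, fun h => ?_⟩
    rw [Set.mem_singleton_iff] at h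
    subst h
    exact Set.disjoint_left.mp (hπ.2.1 hC' hZ hC'Z) hg hzZ
  refine Or.inl ⟨insert Z {D | D.Nonempty ∧ ∃ F' ∈ τ, ∃ C' ∈ π, C' ≠ Z ∧ D = F' ∩ C'},
    ⟨?_, ?_, ?_, ?_⟩, Set.mem_insert_iff.mpr
      (Or.inr ⟨hFne, F, hFτ, C, hC, hCZ, (Set.inter_eq_left.mpr hFC).symm⟩)⟩
  · rintro A (rfl | ⟨hAne, -⟩)
    · exact ⟨z, hzZ⟩
    · exact hAne
  · rintro A (rfl | ⟨-, F₁, hF₁, C₁, hC₁, hC₁Z, rfl⟩) B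
      (rfl | ⟨-, F₂, hF₂, C₂, hC₂, hC₂Z, rfl⟩) hAB
    · exact absurd rfl hAB
    · exact ((hπ.2.1 hZ hC₂ (Ne.symm hC₂Z)).mono_right Set.inter_subset_right)
    · exact ((hπ.2.1 hC₁ hZ hC₁Z).mono_left Set.inter_subset_right)
    · by_cases hF : F₁ = F₂
      · subst hF
        have hCC : C₁ ≠ C₂ := fun h => hAB (by rw [h])
        exact ((hπ.2.1 hC₁ hC₂ hCC).mono Set.inter_subset_right Set.inter_subset_right)
      · exact ((hτdisj hF₁ hF₂ hF).mono Set.inter_subset_left Set.inter_subset_left)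
  · apply Set.eq_univ_of_forall
    intro g
    by_cases hgZ : g ∈ Z
    · exact ⟨Z, Set.mem_insert _ _, hgZ⟩
    · have hg' : g ∈ ⋃₀ π := by rw [hπ.2.2.1]; trivial
      obtain ⟨C', hC', hgC'⟩ := hg'
      have hC'Z : C' ≠ Z := fun h => hgZ (h ▸ hgC')
      have hgH : g ∈ ⋃₀ τ := by rw [hτcov]; exact hCH C' hC' hC'Z hgC'
      obtain ⟨F', hF', hgF'⟩ := hgH
      exact ⟨F' ∩ C', Set.mem_insert_iff.mpr
        (Or.inr ⟨⟨g, hgF', hgC'⟩, F', hF', C', hC', hC'Z, rfl⟩), hgF', hgC'⟩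
  · rintro A (rfl | ⟨-, F₁, hF₁, C₁, hC₁, hC₁Z, rfl⟩)
    · exact hπ.2.2.2 _ hZ
    · exact extent_inter (hτext F₁ hF₁) (hπ.2.2.2 C₁ hC₁) (hCH C₁ hC₁ hC₁Z)

end BoxAux

/-- If moreover `T` contains every minimal nonempty box extent (atom) of the subcontext,
then `T* ∪ {z^□□}` is a classification tree in `B(G,M,I)` containing every minimal
nonempty box extent of `(G,M,I)`. -/
theorem treeStar_with_atom_isBoxClassTree_with_atoms
    [Fintype G] [Fintype M] (I : G → M → Prop)
    (hempty : cl2 I Set.univ (∅ : Set G) = ∅)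
    (z : G) (π : Set (Set G)) (hπ : IsFinestExtentPartition I Set.univ π)
    (Z : Set G) (hZ : Z ∈ π) (hzZ : z ∈ Z) (hZne : Z ≠ {z})
    (T : Set (Set G)) (hT : IsBoxClassTree I (Set.univ \ {z}) T)
    (hatoms : ∀ A : Set G, A.Nonempty → IsBoxExtent I (Set.univ \ {z}) A →
      (∀ F : Set G, F.Nonempty → IsBoxExtent I (Set.univ \ {z}) F → F ⊆ A → F = A) →
      A ∈ T) :
    IsBoxClassTree I Set.univ (treeStar I z T ∪ {Z}) ∧
    ∀ A : Set G, A.Nonempty → IsBoxExtent I Set.univ A →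
      (∀ F : Set G, F.Nonempty → IsBoxExtent I Set.univ F → F ⊆ A → F = A) →
      A ∈ treeStar I z T ∪ {Z} := by
  classical
  obtain ⟨hTmem, hTchainP⟩ := hT
  obtain ⟨hπpart, hfinest⟩ := hπ
  have hπdisj := hπpart.2.1
  have hH0 : cl2 I (Set.univ \ {z}) (∅ : Set G) = ∅ := by
    rw [cl2_eq_inter, hempty, Set.empty_inter]
  have hZz : (Z \ {z}).Nonempty := by
    rw [Set.diff_nonempty]
    intro h
    exact hZne (Set.Subset.antisymm h (Set.singleton_subset_iff.mpr hzZ))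
  have hTsub : ∀ E ∈ T, E ⊆ Set.univ \ {z} :=
    fun E hE => box_subset hH0 (hTmem E hE).2 (hTmem E hE).1
  have hclasssub : ∀ X : Set G, IsBoxExtent I Set.univ X → X.Nonempty →
      ∀ C ∈ π, (X ∩ C).Nonempty → C ⊆ X := by
    rintro X hX hXne C hC ⟨g, hgX, hgC⟩
    obtain ⟨σ, hσ, hXσ⟩ := box_class hempty hX hXne
    obtain ⟨S, hSπ, rfl⟩ := hfinest σ hσ X hXσ
    obtain ⟨D, hDS, hgD⟩ := hgX
    have hCD : C = D := by
      by_contra h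
      exact Set.disjoint_left.mp (hπdisj hC (hSπ hDS) h) hgC hgD
    rw [hCD]
    exact Set.subset_sUnion_of_mem hDS
  have hZsub : ∀ X : Set G, IsBoxExtent I Set.univ X → z ∈ X → Z ⊆ X :=
    fun X hX hzX => hclasssub X hX ⟨z, hzX⟩ Z hZ ⟨z, hzX, hzZ⟩
  have hπH := induced_partition (I := I) z hπpart
  have hZzbox : IsBoxExtent I (Set.univ \ {z}) (Z \ {z}) :=
    Or.inl ⟨_, hπH, ⟨hZz, Z, hZ, rfl⟩⟩
  have hboxH : ∀ X : Set G, IsBoxExtent I Set.univ X → X.Nonempty → z ∉ X →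
      IsBoxExtent I (Set.univ \ {z}) X := by
    intro X hX hXne hzX
    obtain ⟨σ, hσ, hXσ⟩ := box_class hempty hX hXne
    exact Or.inl ⟨_, induced_partition (I := I) z hσ,
      ⟨hXne, X, hXσ, (Set.diff_singleton_eq_self hzX).symm⟩⟩
  have hHne : (Set.univ \ {z} : Set G).Nonempty := by
    obtain ⟨w, hw⟩ := hZz
    exact ⟨w, trivial, hw.2⟩
  have hHext : IsExtent I (Set.univ \ {z}) (Set.univ \ {z}) :=
    ⟨subset_rfl, Set.Subset.antisymm (cl2_subset _ _) (subset_cl2 subset_rfl)⟩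
  have hHbox : IsBoxExtent I (Set.univ \ {z}) (Set.univ \ {z}) := by
    refine Or.inl ⟨{Set.univ \ {z}}, ⟨?_, Set.pairwise_singleton _ _,
      Set.sUnion_singleton _, ?_⟩, Set.mem_singleton _⟩
    · intro A hA; rw [Set.mem_singleton_iff] at hA; subst hA; exact hHne
    · intro A hA; rw [Set.mem_singleton_iff] at hA; subst hA; exact hHext
  have hHT : Set.univ \ {z} ∈ T := by
    obtain ⟨⟨E, hE⟩, -⟩ := hTchainP (Set.univ \ {z}) hHne hHbox
    have hEH : E = Set.univ \ {z} := Set.Subset.antisymm (hTsub E hE.1) hE.2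
    exact hEH ▸ hE.1
  have hunivbox : IsBoxExtent I Set.univ (Set.univ : Set G) := by
    refine Or.inl ⟨{Set.univ}, ⟨?_, Set.pairwise_singleton _ _,
      Set.sUnion_singleton _, ?_⟩, Set.mem_singleton _⟩
    · intro A hA; rw [Set.mem_singleton_iff] at hA; subst hA; exact ⟨z, trivial⟩
    · intro A hA; rw [Set.mem_singleton_iff] at hA; subst hA
      exact ⟨subset_rfl, Set.Subset.antisymm (Set.subset_univ _) (subset_cl2 subset_rfl)⟩
  have hHzuniv : (Set.univ \ {z} : Set G) ∪ {z} = Set.univ := by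
    rw [Set.diff_union_self]
    simp
  have hunivstar : (Set.univ : Set G) ∈ treeStar I z T :=
    Or.inr ⟨Set.univ \ {z}, ⟨hHT, by rw [hHzuniv]; exact hunivbox⟩, hHzuniv⟩
  have hcontra : ∀ E ∈ T, IsBoxExtent I Set.univ E → (E ∩ Z).Nonempty → False := by
    intro E hET hEbox hEZ
    have hZE : Z ⊆ E := hclasssub E hEbox (hTmem E hET).1 Z hZ hEZ
    exact (hTsub E hET (hZE hzZ)).2 rfl
  have hZdiffsub : ∀ E ∈ T, IsBoxExtent I Set.univ (E ∪ {z}) → Z \ {z} ⊆ E := by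
    intro E hET hbox g hg
    rcases hZsub (E ∪ {z}) hbox (Set.mem_union_right _ rfl) hg.1 with h | h
    · exact h
    · exact absurd h hg.2
  have hZunion : ∀ E : Set G, Z \ {z} ⊆ E → Z ⊆ E ∪ {z} := by
    intro E hE g hg
    by_cases hgz : g = z
    · exact Set.mem_union_right _ (by simp [hgz])
    · exact Set.mem_union_left _ (hE ⟨hg, by simp [hgz]⟩)
  have hTchain : ∀ Y : Set G, Y.Nonempty → IsBoxExtent I (Set.univ \ {z}) Y →
      ∀ E₁ ∈ T, ∀ E₂ ∈ T, Y ⊆ E₁ → Y ⊆ E₂ → E₁ ⊆ E₂ ∨ E₂ ⊆ E₁ := by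
    intro Y hYne hYbox E₁ h1 E₂ h2 hs1 hs2
    rcases eq_or_ne E₁ E₂ with rfl | hne
    · exact Or.inl subset_rfl
    · exact (hTchainP Y hYne hYbox).2 ⟨h1, hs1⟩ ⟨h2, hs2⟩ hne
  constructor
  · constructor
    · rintro E ((⟨hET, hbox⟩ | ⟨E', ⟨hE'T, hbox⟩, rfl⟩) | hEZ)
      · exact ⟨(hTmem E hET).1, hbox⟩
      · exact ⟨⟨z, Set.mem_union_right _ rfl⟩, hbox⟩
      · rw [Set.mem_singleton_iff] at hEZ
        subst hEZ
        exact ⟨⟨z, hzZ⟩, Or.inl ⟨π, hπpart, hZ⟩⟩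
    · intro X hXne hXbox
      refine ⟨⟨Set.univ, Set.mem_union_left _ hunivstar, Set.subset_univ X⟩, ?_⟩
      rintro A ⟨hA, hXA⟩ B ⟨hB, hXB⟩ hAB
      rcases hA with (⟨hAT, hAbox⟩ | ⟨E₁, ⟨hE₁T, hbox1⟩, rfl⟩) | hAZ
      · have hzX : z ∉ X := fun h => (hTsub A hAT (hXA h)).2 rfl
        have hXH : IsBoxExtent I (Set.univ \ {z}) X := hboxH X hXbox hXne hzX
        rcases hB with (⟨hBT, hBbox⟩ | ⟨E₂, ⟨hE₂T, hbox2⟩, rfl⟩) | hBZ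
        · exact hTchain X hXne hXH A hAT B hBT hXA hXB
        · have hXE₂ : X ⊆ E₂ := fun g hg => (hXB hg).resolve_right
            (fun h => hzX (Set.mem_singleton_iff.mp h ▸ hg))
          rcases hTchain X hXne hXH A hAT E₂ hE₂T hXA hXE₂ with h | h
          · exact Or.inl (h.trans Set.subset_union_left)
          · obtain ⟨w, hw⟩ := hZz
            exact (hcontra A hAT hAbox ⟨w, h (hZdiffsub E₂ hE₂T hbox2 hw), hw.1⟩).elim
        · rw [Set.mem_singleton_iff] at hBZ
          subst hBZ
          obtain ⟨g, hg⟩ := hXne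
          exact (hcontra A hAT hAbox ⟨g, hXA hg, hXB hg⟩).elim
      · have hZ1 := hZdiffsub E₁ hE₁T hbox1
        rcases hB with (⟨hBT, hBbox⟩ | ⟨E₂, ⟨hE₂T, hbox2⟩, rfl⟩) | hBZ
        · have hzX : z ∉ X := fun h => (hTsub B hBT (hXB h)).2 rfl
          have hXH : IsBoxExtent I (Set.univ \ {z}) X := hboxH X hXbox hXne hzX
          have hXE₁ : X ⊆ E₁ := fun g hg => (hXA hg).resolve_right
            (fun h => hzX (Set.mem_singleton_iff.mp h ▸ hg))
          rcases hTchain X hXne hXH E₁ hE₁T B hBT hXE₁ hXB with h | h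
          · obtain ⟨w, hw⟩ := hZz
            exact (hcontra B hBT hBbox ⟨w, h (hZ1 hw), hw.1⟩).elim
          · exact Or.inr (h.trans Set.subset_union_left)
        · rcases hTchain (Z \ {z}) hZz hZzbox E₁ hE₁T E₂ hE₂T hZ1
            (hZdiffsub E₂ hE₂T hbox2) with h | h
          · exact Or.inl (Set.union_subset_union_left _ h)
          · exact Or.inr (Set.union_subset_union_left _ h)
        · rw [Set.mem_singleton_iff] at hBZ
          subst hBZ
          exact Or.inr (hZunion E₁ hZ1)
      · rw [Set.mem_singleton_iff] at hAZ
        subst hAZ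
        rcases hB with (⟨hBT, hBbox⟩ | ⟨E₂, ⟨hE₂T, hbox2⟩, rfl⟩) | hBZ
        · obtain ⟨g, hg⟩ := hXne
          exact (hcontra B hBT hBbox ⟨g, hXB hg, hXA hg⟩).elim
        · exact Or.inl (hZunion E₂ (hZdiffsub E₂ hE₂T hbox2))
        · rw [Set.mem_singleton_iff] at hBZ
          exact absurd hBZ.symm hAB
  · intro A hAne hAbox hAmin
    obtain ⟨σ, hσ, hAσ⟩ := box_class hempty hAbox hAne
    obtain ⟨S, hSπ, hASeq⟩ := hfinest σ hσ A hAσ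
    obtain ⟨g, hgA⟩ := hAne
    have hgS : g ∈ ⋃₀ S := hASeq ▸ hgA
    obtain ⟨C, hCS, hgC⟩ := hgS
    have hCπ := hSπ hCS
    have hCbox : IsBoxExtent I Set.univ C := Or.inl ⟨π, hπpart, hCπ⟩
    have hCA : C ⊆ A := by rw [hASeq]; exact Set.subset_sUnion_of_mem hCS
    have hCAeq : C = A := hAmin C ⟨g, hgC⟩ hCbox hCA
    subst hCAeq
    by_cases hCZ : C = Z
    · exact Or.inr (by simp [hCZ])
    · have hzC : z ∉ C := fun h => Set.disjoint_left.mp (hπdisj hCπ hZ hCZ) h hzZ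
      have hCboxH : IsBoxExtent I (Set.univ \ {z}) C := hboxH C hCbox ⟨g, hgC⟩ hzC
      have hminH : ∀ F : Set G, F.Nonempty → IsBoxExtent I (Set.univ \ {z}) F →
          F ⊆ C → F = C := fun F hFne hFbox hFC =>
        hAmin F hFne (box_univ_of_sub_class hempty hπpart hZ hzZ hCπ hCZ hFne hFbox hFC) hFC
      exact Or.inl (Or.inl ⟨hatoms C ⟨g, hgC⟩ hCboxH hminH, hCbox⟩)
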